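/- For all integers r ≥ 2, k with 1 ≤ k ≤ r−1, and n with 0 ≤ n ≤ r−1−k, the identity Σ_{m=0}^{r−1−k} C(m+k, k) C(r, m+k+1) (−1)^{m−n} C(m−1, n) = C(k+n+1, k+1) holds, where C(m−1, n) uses the generalized binomial convention C(−1, n) = (−1)^n and C(m−1, n) = 0 for 1 ≤ m ≤ n. -/

import Mathlib

/-- Generalized binomial coefficient `C(m-1, n)` with the convention `C(-1, n) = (-1)^n`. -/
def gchooseM1 (m n : ℕ) : ℚ := if m = 0 then (-1) ^ n else ((m - 1).choose n : ℚ)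

lemma alt_sum (s : ℕ) (hs : 1 ≤ s) :
    (∑ m ∈ Finset.range (s + 1), (-1 : ℚ) ^ m * (s.choose m : ℚ)) = 0 := by
  have h := Int.alternating_sum_range_choose (n := s)
  rw [if_neg (by omega)] at h
  have : ((∑ i ∈ Finset.range (s + 1), (-1 : ℤ) ^ i * (s.choose i : ℤ) : ℤ) : ℚ) = 0 := by
    rw [h]; norm_num
  push_cast at this
  exact this

lemma alt_sum_choose (s j : ℕ) (hj : j < s) :
    (∑ m ∈ Finset.range (s + 1), (-1 : ℚ) ^ m * (s.choose m : ℚ) * (m.choose j : ℚ)) = 0 := by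
  rw [Finset.range_eq_Ico, ← Finset.sum_Ico_consecutive _ (Nat.zero_le j) (by omega : j ≤ s + 1)]
  have h1 : (∑ m ∈ Finset.Ico 0 j, (-1 : ℚ) ^ m * (s.choose m : ℚ) * (m.choose j : ℚ)) = 0 := by
    apply Finset.sum_eq_zero
    intro m hm
    rw [Finset.mem_Ico] at hm
    rw [Nat.choose_eq_zero_of_lt hm.2]
    simp
  rw [h1, zero_add, Finset.sum_Ico_eq_sum_range]
  have h2 : ∀ t ∈ Finset.range (s + 1 - j),
      (-1 : ℚ) ^ (j + t) * (s.choose (j + t) : ℚ) * ((j + t).choose j : ℚ)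
        = ((-1 : ℚ) ^ j * (s.choose j : ℚ)) * ((-1 : ℚ) ^ t * ((s - j).choose t : ℚ)) := by
    intro t ht
    rw [Finset.mem_range] at ht
    have hc : s.choose (j + t) * (j + t).choose j = s.choose j * (s - j).choose t := by
      have := Nat.choose_mul (n := s) (k := j + t) (s := j) (by omega)
      simpa using this
    have hc' : (s.choose (j + t) : ℚ) * ((j + t).choose j : ℚ)
        = (s.choose j : ℚ) * ((s - j).choose t : ℚ) := by
      exact_mod_cast congrArg (Nat.cast : ℕ → ℚ) hc
    rw [pow_add]
    ring_nf
    ring_nf at hc'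
    rw [mul_assoc, hc']
    ring
  rw [Finset.sum_congr rfl h2, ← Finset.mul_sum]
  have hs : s + 1 - j = (s - j) + 1 := by omega
  rw [hs, alt_sum (s - j) (by omega), mul_zero]

lemma gchooseM1_succ (m n : ℕ) :
    gchooseM1 m (n + 1) = (m.choose (n + 1) : ℚ) - gchooseM1 m n := by
  unfold gchooseM1
  cases m with
  | zero => simp [pow_succ]
  | succ m' =>
    simp only [Nat.succ_ne_zero, if_false, Nat.succ_sub_one]
    rw [Nat.choose_succ_succ]
    push_cast
    ring

lemma key_lemma (n : ℕ) : ∀ s : ℕ, n + 1 ≤ s →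
    (∑ m ∈ Finset.range (s + 1), (-1 : ℚ) ^ m * (s.choose m : ℚ) * gchooseM1 m n) = 0 := by
  induction n with
  | zero =>
    intro s hs
    have : ∀ m ∈ Finset.range (s + 1),
        (-1 : ℚ) ^ m * (s.choose m : ℚ) * gchooseM1 m 0 = (-1 : ℚ) ^ m * (s.choose m : ℚ) := by
      intro m _
      unfold gchooseM1
      cases m with
      | zero => simp
      | succ m' => simp
    rw [Finset.sum_congr rfl this, alt_sum s hs]
  | succ n ih =>
    intro s hs
    have : ∀ m ∈ Finset.range (s + 1),
        (-1 : ℚ) ^ m * (s.choose m : ℚ) * gchooseM1 m (n + 1)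
          = (-1 : ℚ) ^ m * (s.choose m : ℚ) * (m.choose (n + 1) : ℚ)
            - (-1 : ℚ) ^ m * (s.choose m : ℚ) * gchooseM1 m n := by
      intro m _
      rw [gchooseM1_succ]
      ring
    rw [Finset.sum_congr rfl this, Finset.sum_sub_distrib,
      alt_sum_choose s (n + 1) (by omega), ih s (by omega), sub_zero]

lemma main_aux (k n : ℕ) : ∀ d : ℕ,
    (∑ m ∈ Finset.range ((k + n + 1 + d) - k), ((m + k).choose k : ℚ) *
        ((k + n + 1 + d).choose (m + k + 1) : ℚ) * (-1 : ℚ) ^ (m + n) * gchooseM1 m n) =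
      ((k + n + 1).choose (k + 1) : ℚ) := by
  intro d
  induction d with
  | zero =>
    have hrange : (k + n + 1 + 0) - k = n + 1 := by omega
    rw [hrange]
    rw [Finset.sum_eq_single_of_mem 0 (Finset.mem_range.mpr (by omega))]
    · simp only [zero_add, Nat.add_zero, Nat.choose_self, Nat.cast_one, one_mul]
      unfold gchooseM1
      rw [if_pos rfl]
      have h1 : ((-1 : ℚ) ^ n) * ((-1 : ℚ) ^ n) = 1 := by
        rw [← pow_add, Even.neg_one_pow ⟨n, by ring⟩]
      linear_combination (((k + n + 1).choose (k + 1) : ℚ)) * h1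
    · intro m hm hm0
      rw [Finset.mem_range] at hm
      unfold gchooseM1
      rw [if_neg hm0, Nat.choose_eq_zero_of_lt (show m - 1 < n by omega)]
      simp
  | succ d ih =>
    set r := k + n + 1 + d with hr
    have h1 : (k + n + 1 + (d + 1)) = r + 1 := by omega
    have h2 : (r + 1) - k = (r - k) + 1 := by omega
    rw [h1, h2]
    have hsplit : ∀ m ∈ Finset.range ((r - k) + 1),
        ((m + k).choose k : ℚ) * ((r + 1).choose (m + k + 1) : ℚ) * (-1 : ℚ) ^ (m + n) *
            gchooseM1 m n
          = ((m + k).choose k : ℚ) * (r.choose (m + k) : ℚ) * (-1 : ℚ) ^ (m + n) * gchooseM1 m n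
            + ((m + k).choose k : ℚ) * (r.choose (m + k + 1) : ℚ) * (-1 : ℚ) ^ (m + n) *
              gchooseM1 m n := by
      intro m _
      have : (r + 1).choose (m + k + 1) = r.choose (m + k) + r.choose (m + k + 1) :=
        Nat.choose_succ_succ r (m + k)
      rw [this]
      push_cast
      ring
    rw [Finset.sum_congr rfl hsplit, Finset.sum_add_distrib]
    have hA : (∑ m ∈ Finset.range ((r - k) + 1),
        ((m + k).choose k : ℚ) * (r.choose (m + k) : ℚ) * (-1 : ℚ) ^ (m + n) * gchooseM1 m n)
          = 0 := by
      have hA1 : ∀ m ∈ Finset.range ((r - k) + 1),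
          ((m + k).choose k : ℚ) * (r.choose (m + k) : ℚ) * (-1 : ℚ) ^ (m + n) * gchooseM1 m n
            = ((r.choose k : ℚ) * (-1 : ℚ) ^ n) *
              ((-1 : ℚ) ^ m * ((r - k).choose m : ℚ) * gchooseM1 m n) := by
        intro m hm
        rw [Finset.mem_range] at hm
        have hc : r.choose (m + k) * (m + k).choose k = r.choose k * (r - k).choose m := by
          have := Nat.choose_mul (n := r) (k := m + k) (s := k) (by omega)
          simpa using this
        have hc' : (r.choose (m + k) : ℚ) * ((m + k).choose k : ℚ)
            = (r.choose k : ℚ) * ((r - k).choose m : ℚ) := by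
          exact_mod_cast congrArg (Nat.cast : ℕ → ℚ) hc
        rw [pow_add]
        calc ((m + k).choose k : ℚ) * (r.choose (m + k) : ℚ) * ((-1:ℚ)^m * (-1:ℚ)^n) *
              gchooseM1 m n
            = ((r.choose (m + k) : ℚ) * ((m + k).choose k : ℚ)) * ((-1:ℚ)^m * (-1:ℚ)^n) *
              gchooseM1 m n := by ring
          _ = ((r.choose k : ℚ) * ((r - k).choose m : ℚ)) * ((-1:ℚ)^m * (-1:ℚ)^n) *
              gchooseM1 m n := by rw [hc']
          _ = ((r.choose k : ℚ) * (-1 : ℚ) ^ n) *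
              ((-1 : ℚ) ^ m * ((r - k).choose m : ℚ) * gchooseM1 m n) := by ring
      rw [Finset.sum_congr rfl hA1, ← Finset.mul_sum,
        key_lemma n (r - k) (by omega), mul_zero]
    rw [hA, zero_add]
    rw [Finset.sum_range_succ]
    have htop : r.choose ((r - k) + k + 1) = 0 := by
      apply Nat.choose_eq_zero_of_lt
      omega
    rw [htop]
    push_cast
    simp only [mul_zero, zero_mul, add_zero]
    exact ih

theorem sum_identity_one (r k n : ℕ) (hr : 2 ≤ r) (hk1 : 1 ≤ k) (hk : k ≤ r - 1)
    (hn : n ≤ r - 1 - k) :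
    (∑ m ∈ Finset.range (r - k), ((m + k).choose k : ℚ) * (r.choose (m + k + 1) : ℚ) *
        (-1 : ℚ) ^ (m + n) * gchooseM1 m n) =
      ((k + n + 1).choose (k + 1) : ℚ) := by
  obtain ⟨d, hd⟩ : ∃ d, r = k + n + 1 + d := ⟨r - (k + n + 1), by omega⟩
  subst hd
  exact main_aux k n d
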